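/- Let p0 ∈ ℝ, D : ℝ → ℝ, and D0, D1 : ℝ × ℝ → ℝ. Suppose D1 is (Fréchet) differentiable at (p0, p0), D1(p, p) = D(p) for all p ∈ ℝ, and for each fixed y the map x ↦ D1(x, y) is nondecreasing. Then D is differentiable at p0 and ∂D1/∂y(p0, p0) ≤ D'(p0). Moreover, if for each fixed x the map y ↦ D0(x, y) is nondecreasing and ∂D0/∂y exists at (p0, p0), then ∂D0/∂y(p0, p0) ≥ 0. -/

import Mathlib

open Filter Topology

lemma monotone_hasDerivAt_nonneg {f : ℝ → ℝ} {d x : ℝ}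
    (hf : Monotone f) (hd : HasDerivAt f d x) : 0 ≤ d := by
  have h := (hasDerivAt_iff_tendsto_slope.mp hd).mono_left
    (nhdsWithin_mono x (by intro y hy; exact ne_of_gt hy : Set.Ioi x ⊆ {x}ᶜ))
  refine le_of_tendsto_of_tendsto tendsto_const_nhds h ?_
  filter_upwards [self_mem_nhdsWithin] with y (hy : x < y)
  have : f x ≤ f y := hf hy.le
  have hxy : 0 < y - x := by linarith
  rw [slope_def_field]
  exact div_nonneg (by linarith) (by linarith)

/-- substitution and constant returns imply bounds on the
partial derivatives of the experimental demand functions. -/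
theorem demand_partials_bounds
    (p0 : ℝ) (D : ℝ → ℝ) (D0 D1 : ℝ × ℝ → ℝ)
    (L : ℝ × ℝ →L[ℝ] ℝ)
    (hD1 : HasFDerivAt D1 L (p0, p0))
    (hdiag : ∀ p : ℝ, D1 (p, p) = D p)
    (hmono1 : ∀ y : ℝ, Monotone (fun x => D1 (x, y))) :
    (DifferentiableAt ℝ D p0 ∧ L (0, 1) ≤ deriv D p0) ∧
      ∀ d0y : ℝ, (∀ x : ℝ, Monotone (fun y => D0 (x, y))) →
        HasDerivAt (fun y => D0 (p0, y)) d0y p0 → 0 ≤ d0y := by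
  have hdiagmap : HasDerivAt (fun p : ℝ => ((p, p) : ℝ × ℝ)) (1, 1) p0 :=
    HasDerivAt.prodMk (hasDerivAt_id p0) (hasDerivAt_id p0)
  have hD : HasDerivAt D (L (1, 1)) p0 := by
    have h : HasDerivAt (fun p : ℝ => D1 (p, p)) (L (1, 1)) p0 := by
      simpa [Function.comp_def] using (HasFDerivAt.comp (f := fun p : ℝ => ((p, p) : ℝ × ℝ)) p0 hD1 hdiagmap.hasFDerivAt).hasDerivAt
    rwa [show (fun p : ℝ => D1 (p, p)) = D from funext hdiag] at h
  have hxmap : HasDerivAt (fun x : ℝ => ((x, p0) : ℝ × ℝ)) (1, 0) p0 :=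
    HasDerivAt.prodMk (hasDerivAt_id p0) (hasDerivAt_const p0 p0)
  have hx : HasDerivAt (fun x => D1 (x, p0)) (L (1, 0)) p0 := by
    simpa [Function.comp_def] using (HasFDerivAt.comp (f := fun x : ℝ => ((x, p0) : ℝ × ℝ)) p0 hD1 hxmap.hasFDerivAt).hasDerivAt
  have hx0 : 0 ≤ L (1, 0) := monotone_hasDerivAt_nonneg (hmono1 p0) hx
  refine ⟨⟨hD.differentiableAt, ?_⟩, ?_⟩
  · rw [hD.deriv]
    have h11 : L ((1 : ℝ), (1 : ℝ)) = L (1, 0) + L (0, 1) := by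
      rw [← L.map_add, Prod.mk_add_mk]; norm_num
    linarith
  · intro d0y hmono0 hderiv
    exact monotone_hasDerivAt_nonneg (hmono0 p0) hderiv
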